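/- Let A and Â be abelian groups, φ_l : A → Â and φ_m : Â → A group homomorphisms, and r, s, χ integers such that φ_m ∘ φ_l equals multiplication by −χ on A and φ_l ∘ φ_m equals multiplication by −χ on Â. Let p be a prime and q ≥ 1 with p^q ∣ χ and p^q ∣ r. Assume A[p^q] and Â[p^q] have order p^{4q}, and that ker φ_l ∩ A[p^q] ≅ (ℤ/p^qℤ)² and ker φ_m ∩ Â[p^q] ≅ (ℤ/p^qℤ)². Then G ∩ (A[p^q] × Â[p^q]) ≅ (ℤ/p^qℤ)⁴, where G := {(x,y) ∈ A × Â : φ_l(x) = −r·y and φ_m(y) = s·x}. -/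

import Mathlib

def torsionSub (m : ℤ) (A : Type*) [AddCommGroup A] : AddSubgroup A where
  carrier := {a | m • a = 0}
  zero_mem' := smul_zero m
  add_mem' := by
    intro a b ha hb
    simp only [Set.mem_setOf_eq, smul_add] at *
    rw [ha, hb, add_zero]
  neg_mem' := by
    intro a ha
    simp only [Set.mem_setOf_eq, smul_neg] at *
    rw [ha, neg_zero]

def solSub {A Ahat : Type*} [AddCommGroup A] [AddCommGroup Ahat]
    (φl : A →+ Ahat) (φm : Ahat →+ A) (r s : ℤ) : AddSubgroup (A × Ahat) where
  carrier := {p | φl p.1 = -(r • p.2) ∧ φm p.2 = s • p.1}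
  zero_mem' := ⟨by simp, by simp⟩
  add_mem' := by
    rintro p q ⟨hp1, hp2⟩ ⟨hq1, hq2⟩
    refine ⟨?_, ?_⟩
    · show φl (p.1 + q.1) = -(r • (p.2 + q.2))
      rw [map_add, hp1, hq1, smul_add, neg_add]
    · show φm (p.2 + q.2) = s • (p.1 + q.1)
      rw [map_add, hp2, hq2, smul_add]
  neg_mem' := by
    rintro p ⟨hp1, hp2⟩
    refine ⟨?_, ?_⟩
    · show φl (-p.1) = -(r • (-p.2))
      rw [map_neg, hp1, smul_neg, neg_neg]
    · show φm (-p.2) = s • (-p.1)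
      rw [map_neg, hp2, smul_neg]

/-- Wrapper to keep the `ZMod`-module structure from unfolding. -/
def zmodModuleOf {G : Type*} [AddCommGroup G] {n : ℕ} (h : ∀ x : G, n • x = 0) :
    Module (ZMod n) G :=
  AddCommGroup.zmodModule h

lemma mem_torsionSub {m : ℤ} {A : Type*} [AddCommGroup A] {a : A} :
    a ∈ torsionSub m A ↔ m • a = 0 := Iff.rfl

/-- `(Fin 2 → M) × (Fin 2 → M) ≃+ (Fin 4 → M)`. -/
def finPairAddEquiv (M : Type*) [AddCommMonoid M] :
    ((Fin 2 → M) × (Fin 2 → M)) ≃+ (Fin 4 → M) where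
  toFun z i := if h : (i : ℕ) < 2 then z.1 ⟨i, h⟩ else z.2 ⟨(i : ℕ) - 2, by omega⟩
  invFun f := (fun i => f ⟨i, by omega⟩, fun i => f ⟨(i : ℕ) + 2, by omega⟩)
  left_inv z := by
    refine Prod.ext ?_ ?_ <;> funext i
    · simp [i.isLt]
    · have : ¬ ((i : ℕ) + 2 < 2) := by omega
      simp [this]
  right_inv f := by
    funext i
    by_cases h : (i : ℕ) < 2
    · simp only [dif_pos h]
    · simp only [dif_neg h]
      congr 1
      exact Fin.ext (by simp; omega)
  map_add' a b := by
    funext i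
    by_cases h : (i : ℕ) < 2
    · simp [h, show (i : ℕ) ≤ 1 by omega]
    · simp [h, show ¬ (i : ℕ) ≤ 1 by omega]

set_option maxHeartbeats 1000000 in
set_option synthInstance.maxHeartbeats 400000 in
theorem solSub_pq_torsion_iso
    (A Ahat : Type*) [AddCommGroup A] [AddCommGroup Ahat]
    (φl : A →+ Ahat) (φm : Ahat →+ A) (r s χ : ℤ)
    (hml : ∀ a : A, φm (φl a) = (-χ) • a)
    (hlm : ∀ b : Ahat, φl (φm b) = (-χ) • b)
    (p : ℕ) (hp : p.Prime) (q : ℕ) (hq : 1 ≤ q)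
    (hχ : ((p : ℤ) ^ q) ∣ χ) (hr : ((p : ℤ) ^ q) ∣ r)
    (hcardA : Nat.card ↥(torsionSub ((p : ℤ) ^ q) A) = p ^ (4 * q))
    (hcardAhat : Nat.card ↥(torsionSub ((p : ℤ) ^ q) Ahat) = p ^ (4 * q))
    (hkl : Nonempty (↥(φl.ker ⊓ torsionSub ((p : ℤ) ^ q) A) ≃+ (Fin 2 → ZMod (p ^ q))))
    (hkm : Nonempty (↥(φm.ker ⊓ torsionSub ((p : ℤ) ^ q) Ahat) ≃+ (Fin 2 → ZMod (p ^ q)))) :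
    Nonempty (↥(solSub φl φm r s ⊓
        (torsionSub ((p : ℤ) ^ q) A).prod (torsionSub ((p : ℤ) ^ q) Ahat)) ≃+
      (Fin 4 → ZMod (p ^ q))) := by
  classical
  obtain ⟨el⟩ := hkl
  obtain ⟨em⟩ := hkm
  have hpq0 : (p : ℕ) ^ q ≠ 0 := pow_ne_zero _ hp.pos.ne'
  haveI : NeZero (p ^ q) := ⟨hpq0⟩
  -- cardinality of the model group
  have hcard2 : Nat.card (Fin 2 → ZMod (p ^ q)) = p ^ (2 * q) := by
    rw [Nat.card_fun, Nat.card_zmod, Nat.card_eq_fintype_card, Fintype.card_fin, ← pow_mul,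
      mul_comm]
  -- torsion kills r-multiples and χ-multiples
  have hrz : ∀ y : Ahat, y ∈ torsionSub ((p : ℤ) ^ q) Ahat → r • y = 0 := by
    obtain ⟨c, rfl⟩ := hr
    intro y hy
    rw [mul_comm, mul_smul, mem_torsionSub.mp hy, smul_zero]
  have hχzA : ∀ x : A, x ∈ torsionSub ((p : ℤ) ^ q) A → χ • x = 0 := by
    obtain ⟨c, rfl⟩ := hχ
    intro x hx
    rw [mul_comm, mul_smul, mem_torsionSub.mp hx, smul_zero]
  have hχz : ∀ y : Ahat, y ∈ torsionSub ((p : ℤ) ^ q) Ahat → χ • y = 0 := by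
    obtain ⟨c, rfl⟩ := hχ
    intro y hy
    rw [mul_comm, mul_smul, mem_torsionSub.mp hy, smul_zero]
  set L : AddSubgroup A := φl.ker ⊓ torsionSub ((p : ℤ) ^ q) A with hL
  set K : AddSubgroup Ahat := φm.ker ⊓ torsionSub ((p : ℤ) ^ q) Ahat with hK
  set TAh : AddSubgroup Ahat := torsionSub ((p : ℤ) ^ q) Ahat with hTAh
  -- the restriction of φm to p^q-torsion lands in L
  have hψmem : ∀ y : TAh, φm y ∈ L := by
    rintro ⟨y, hy⟩
    refine AddSubgroup.mem_inf.2 ⟨?_, ?_⟩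
    · rw [AddMonoidHom.mem_ker, hlm, neg_smul, hχz y hy, neg_zero]
    · rw [mem_torsionSub, ← map_zsmul, mem_torsionSub.mp hy, map_zero]
  let ψ : TAh →+ L :=
    { toFun := fun y => ⟨φm y, hψmem y⟩
      map_zero' := by ext; simp
      map_add' := fun y z => by ext; simp }
  -- finiteness
  have finTAh : Finite TAh := Nat.finite_of_card_ne_zero (by
    rw [hcardAhat]; exact pow_ne_zero _ hp.pos.ne')
  have hcardK : Nat.card K = p ^ (2 * q) := by rw [Nat.card_congr em.toEquiv, hcard2]
  have hcardL : Nat.card L = p ^ (2 * q) := by rw [Nat.card_congr el.toEquiv, hcard2]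
  have finL : Finite L := Nat.finite_of_card_ne_zero (by
    rw [hcardL]; exact pow_ne_zero _ hp.pos.ne')
  -- kernel of ψ is K
  have eker0 : (ψ.ker : Type _) ≃ K :=
    { toFun := fun z => ⟨(z.1 : Ahat), AddSubgroup.mem_inf.2
        ⟨by
          have h := z.2
          rw [AddMonoidHom.mem_ker] at h
          exact AddMonoidHom.mem_ker.2 (congrArg Subtype.val h), z.1.2⟩⟩
      invFun := fun k => ⟨⟨(k : Ahat), (AddSubgroup.mem_inf.1 k.2).2⟩,
        AddMonoidHom.mem_ker.2 (Subtype.ext (AddMonoidHom.mem_ker.1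
          (AddSubgroup.mem_inf.1 k.2).1))⟩
      left_inv := fun z => by ext; rfl
      right_inv := fun k => by ext; rfl }
  have hcardker : Nat.card ψ.ker = p ^ (2 * q) := by
    rw [Nat.card_congr eker0, hcardK]
  -- ψ is surjective by counting
  have hψsurj : Function.Surjective ψ := by
    rw [← AddMonoidHom.range_eq_top]
    apply AddSubgroup.eq_top_of_card_eq
    have h1 := AddSubgroup.card_eq_card_quotient_mul_card_addSubgroup ψ.ker
    rw [hcardAhat, hcardker] at h1
    have h2 : Nat.card (TAh ⧸ ψ.ker) = Nat.card ψ.range :=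
      Nat.card_congr (QuotientAddGroup.quotientKerEquivRange ψ).toEquiv
    rw [h2] at h1
    have h3 : Nat.card ψ.range = p ^ (2 * q) := by
      have : (p : ℕ) ^ (4 * q) = p ^ (2 * q) * p ^ (2 * q) := by
        rw [← pow_add]; ring_nf
      rw [this] at h1
      exact Nat.eq_of_mul_eq_mul_right (Nat.pos_of_ne_zero (pow_ne_zero _ hp.pos.ne')) h1.symm
    rw [h3, hcardL]
  -- the big group H
  set H : AddSubgroup (A × Ahat) := solSub φl φm r s ⊓
      (torsionSub ((p : ℤ) ^ q) A).prod (torsionSub ((p : ℤ) ^ q) Ahat) with hH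
  -- H is killed by p^q
  have hHtor : ∀ z : H, (p ^ q : ℕ) • z = 0 := by
    rintro ⟨⟨x, y⟩, hz⟩
    obtain ⟨-, hx, hy⟩ := AddSubgroup.mem_inf.1 hz
    ext
    · show (p ^ q : ℕ) • x = 0
      have := mem_torsionSub.mp hx
      rw [← natCast_zsmul]
      push_cast
      exact this
    · show (p ^ q : ℕ) • y = 0
      have := mem_torsionSub.mp hy
      rw [← natCast_zsmul]
      push_cast
      exact this
  have hLtor : ∀ z : L, (p ^ q : ℕ) • z = 0 := by
    rintro ⟨x, hx⟩
    ext
    show (p ^ q : ℕ) • x = 0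
    have := mem_torsionSub.mp (AddSubgroup.mem_inf.1 hx).2
    rw [← natCast_zsmul]
    push_cast
    exact this
  letI modH : Module (ZMod (p ^ q)) H := zmodModuleOf hHtor
  letI modL : Module (ZMod (p ^ q)) L := zmodModuleOf hLtor
  -- the projection π : H → L
  have hπmem : ∀ z : H, (z : A × Ahat).1 ∈ L := by
    rintro ⟨⟨x, y⟩, hz⟩
    obtain ⟨⟨h1, h2⟩, hx, hy⟩ := AddSubgroup.mem_inf.1 hz
    refine AddSubgroup.mem_inf.2 ⟨?_, hx⟩
    rw [AddMonoidHom.mem_ker]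
    show φl x = 0
    rw [h1, hrz y hy, neg_zero]
  let π : H →+ L :=
    { toFun := fun z => ⟨(z : A × Ahat).1, hπmem z⟩
      map_zero' := by ext; rfl
      map_add' := fun a b => by ext; rfl }
  let πₗ : H →ₗ[ZMod (p ^ q)] L := π.toZModLinearMap (p ^ q)
  -- π is surjective
  have hπsurj : ∀ l : ↥L, ∃ h : ↥H, πₗ h = l := by
    rintro ⟨x, hx⟩
    have hsx : s • x ∈ L := zsmul_mem hx s
    obtain ⟨⟨y, hy⟩, hψy⟩ := hψsurj ⟨s • x, hsx⟩
    have hφmy : φm y = s • x := congrArg Subtype.val hψy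
    obtain ⟨hx1, hx2⟩ := AddSubgroup.mem_inf.1 hx
    refine ⟨⟨(x, y), AddSubgroup.mem_inf.2 ⟨⟨?_, hφmy⟩, ⟨hx2, hy⟩⟩⟩, rfl⟩
    show φl x = -(r • y)
    rw [AddMonoidHom.mem_ker.1 hx1, hrz y hy, neg_zero]
  -- L is projective
  let elₗ : L ≃ₗ[ZMod (p ^ q)] (Fin 2 → ZMod (p ^ q)) :=
    { el with map_smul' := fun c x => ZMod.map_smul el.toAddMonoidHom c x }
  haveI : Module.Projective (ZMod (p ^ q)) L :=
    Module.Projective.of_equiv elₗ.symm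
  -- split the sequence
  obtain ⟨σ, hσ⟩ := Module.projective_lifting_property πₗ LinearMap.id (fun l => hπsurj l)
  have hσap : ∀ l : L, πₗ (σ l) = l := fun l => by
    have := congrArg (fun f => f l) (congrArg DFunLike.coe hσ)
    simpa using this
  -- kernel of π is K
  let eker : (LinearMap.ker πₗ) ≃+ K :=
    { toFun := fun z => ⟨(z.1 : A × Ahat).2, by
        obtain ⟨⟨⟨x, y⟩, hz⟩, hz0⟩ := z
        have hx0 : x = 0 := congrArg Subtype.val hz0
        obtain ⟨⟨h1, h2⟩, hx, hy⟩ := AddSubgroup.mem_inf.1 hz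
        refine AddSubgroup.mem_inf.2 ⟨?_, hy⟩
        rw [AddMonoidHom.mem_ker]
        show φm y = 0
        rw [h2, hx0, smul_zero]⟩
      invFun := fun k => ⟨⟨(0, (k : Ahat)), by
        obtain ⟨hk1, hk2⟩ := AddSubgroup.mem_inf.1 k.2
        refine AddSubgroup.mem_inf.2 ⟨⟨?_, ?_⟩, ⟨(torsionSub _ A).zero_mem, hk2⟩⟩
        · show φl 0 = -(r • (k : Ahat))
          rw [map_zero, hrz _ hk2, neg_zero]
        · show φm (k : Ahat) = s • (0 : A)
          rw [AddMonoidHom.mem_ker.1 hk1, smul_zero]⟩, by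
        rw [LinearMap.mem_ker]
        exact Subtype.ext rfl⟩
      left_inv := fun z => by
        refine Subtype.ext (Subtype.ext ?_)
        obtain ⟨⟨⟨x, y⟩, hz⟩, hz0⟩ := z
        have hx0 : x = 0 := congrArg Subtype.val hz0
        show ((0 : A), y) = (x, y)
        rw [hx0]
      right_inv := fun k => rfl
      map_add' := fun a b => by ext; simp }
  -- assemble: H ≃+ ker πₗ × L
  let esplit : H ≃+ (LinearMap.ker πₗ × L) :=
    { toFun := fun h => (⟨h - σ (πₗ h), by
        rw [LinearMap.mem_ker, map_sub, ← LinearMap.comp_apply, hσ, LinearMap.id_apply,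
          sub_self]⟩, πₗ h)
      invFun := fun z => z.1.1 + σ z.2
      left_inv := fun h => by simp
      right_inv := fun z => by
        obtain ⟨⟨k, hk⟩, l⟩ := z
        rw [LinearMap.mem_ker] at hk
        refine Prod.ext (Subtype.ext ?_) ?_
        · show (k + σ l) - σ (πₗ (k + σ l)) = k
          rw [map_add, hk, zero_add, hσap l]
          abel
        · show πₗ (k + σ l) = l
          rw [map_add, hk, zero_add, hσap l]
      map_add' := fun a b => by
        refine Prod.ext (Subtype.ext ?_) (map_add _ _ _)
        show (a + b) - σ (πₗ (a + b)) = (a - σ (πₗ a)) + (b - σ (πₗ b))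
        rw [map_add, map_add]
        abel }
  exact ⟨esplit.trans ((AddEquiv.prodCongr (eker.trans em) el).trans
    (finPairAddEquiv (ZMod (p ^ q))))⟩
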